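/- (Convergence under uniqueness.) In the setting of the convergence theorem—α(δ) → 0 and δ²/α(δ) → 0 as δ → 0—assume additionally that the x*-S-minimum-norm solution x† is unique. Then for any family (x^δ)_{δ>0}, where x^δ is a minimizer of J_{α(δ),S,y^δ} over D(F) for data y^δ with ‖y − y^δ‖_Y ≤ δ, one has x^δ → x† strongly in L²(Ω) as δ → 0. -/

import Mathlib

open MeasureTheory Filter
open scoped RealInnerProductSpace ENNReal Topology

noncomputable section

/-- Weak sequential convergence in a real inner product space. -/
def WeakConv {H : Type*} [NormedAddCommGroup H] [InnerProductSpace ℝ H]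
    (u : ℕ → H) (x : H) : Prop :=
  ∀ z : H, Tendsto (fun k => ⟪u k, z⟫) atTop (𝓝 ⟪x, z⟫)

/-- The squared `L²` mass of (a representative of) `x : L²(Ω)` over the set `T`. -/
def sqInt {n : ℕ} (Ω : Set (Fin n → ℝ)) (T : Set (Fin n → ℝ))
    (x : Lp ℝ 2 (volume.restrict Ω)) : ℝ :=
  ∫ t in T, (x t) ^ 2 ∂(volume.restrict Ω)

/-- The Tikhonov-type functional
`J_{α,S,z}(x) = ‖F(x) − z‖² + α‖x − x*‖_{S⁺}² + ‖x − x*‖_{S⁻}²`. -/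
def J {n : ℕ} (Ω : Set (Fin n → ℝ)) {Y : Type*} [NormedAddCommGroup Y]
    [InnerProductSpace ℝ Y]
    (F : Lp ℝ 2 (volume.restrict Ω) → Y) (xstar : Lp ℝ 2 (volume.restrict Ω))
    (α : ℝ) (S : Set (Fin n → ℝ)) (z : Y) (x : Lp ℝ 2 (volume.restrict Ω)) : ℝ :=
  ‖F x - z‖ ^ 2 + (α * sqInt Ω S (x - xstar) + sqInt Ω (Ω \ S) (x - xstar))

/-- `x` is a minimizer of the functional `Jf` over the set `D`. -/
def IsMinimizer {X' : Type*} (Jf : X' → ℝ) (D : Set X') (x : X') : Prop :=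
  x ∈ D ∧ ∀ x' ∈ D, Jf x ≤ Jf x'

/-- `x = 0` almost everywhere on `Ω ∖ S`. -/
def ZeroOff {n : ℕ} (Ω S : Set (Fin n → ℝ))
    (x : Lp ℝ 2 (volume.restrict Ω)) : Prop :=
  ∀ᵐ t ∂((volume.restrict Ω).restrict (Ω \ S)), x t = 0

/-- `xdag` is an `x*`-`S`-minimum-norm solution of `F(x) = y`: it belongs to
`D(F)`, solves `F(xdag) = y`, vanishes a.e. on `Ω ∖ S`, and minimizes
`‖x − x*‖_{L²}` among all such solutions. -/
def IsMNS {n : ℕ} (Ω : Set (Fin n → ℝ)) {Y : Type*} [NormedAddCommGroup Y]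
    [InnerProductSpace ℝ Y]
    (D : Set (Lp ℝ 2 (volume.restrict Ω))) (F : Lp ℝ 2 (volume.restrict Ω) → Y)
    (xstar : Lp ℝ 2 (volume.restrict Ω)) (S : Set (Fin n → ℝ)) (y : Y)
    (xdag : Lp ℝ 2 (volume.restrict Ω)) : Prop :=
  xdag ∈ D ∧ F xdag = y ∧ ZeroOff Ω S xdag ∧
    ∀ x ∈ D, F x = y → ZeroOff Ω S x → ‖xdag - xstar‖ ≤ ‖x - xstar‖


/-! ### Auxiliary lemmas -/

section Aux

theorem weak_seq_compact {H : Type*} [NormedAddCommGroup H] [InnerProductSpace ℝ H]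
    [CompleteSpace H] [SecondCountableTopology H]
    (u : ℕ → H) (C : ℝ) (hC : ∀ k, ‖u k‖ ≤ C) :
    ∃ x : H, ∃ φ : ℕ → ℕ, StrictMono φ ∧ WeakConv (u ∘ φ) x := by
  have hC0 : 0 ≤ C := le_trans (norm_nonneg _) (hC 0)
  obtain ⟨z, hz⟩ := TopologicalSpace.exists_dense_seq H
  have hmem : ∀ k, (fun i => ⟪u k, z i⟫) ∈
      Set.univ.pi (fun i => Set.Icc (-(C * ‖z i‖)) (C * ‖z i‖)) := by
    intro k i _
    have hb : |⟪u k, z i⟫| ≤ C * ‖z i‖ :=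
      (abs_real_inner_le_norm (u k) (z i)).trans
        (mul_le_mul_of_nonneg_right (hC k) (norm_nonneg _))
    exact abs_le.1 hb
  obtain ⟨L, -, φ, hφ, hconv⟩ :=
    (isCompact_univ_pi fun i => isCompact_Icc).tendsto_subseq hmem
  have hcoord : ∀ i, Tendsto (fun k => ⟪u (φ k), z i⟫) atTop (𝓝 (L i)) :=
    fun i => (tendsto_pi_nhds.1 hconv) i
  have hcau : ∀ w : H, CauchySeq (fun k => ⟪u (φ k), w⟫) := by
    intro w
    rw [Metric.cauchySeq_iff]
    intro ε hε
    obtain ⟨i, hi⟩ :=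
      hz.exists_dist_lt w (show (0:ℝ) < ε / (4 * (C + 1)) by positivity)
    obtain ⟨N, hN⟩ := (Metric.cauchySeq_iff.1 (hcoord i).cauchySeq) (ε/2) (by positivity)
    refine ⟨N, fun m hm k hk => ?_⟩
    have key : ∀ j, |⟪u (φ j), w⟫ - ⟪u (φ j), z i⟫| < ε / 4 := by
      intro j
      have h1 : ⟪u (φ j), w⟫ - ⟪u (φ j), z i⟫ = ⟪u (φ j), w - z i⟫ := by
        rw [inner_sub_right]
      rw [h1]
      have h2 : |⟪u (φ j), w - z i⟫| ≤ C * ‖w - z i‖ :=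
        (abs_real_inner_le_norm _ _).trans
          (mul_le_mul_of_nonneg_right (hC _) (norm_nonneg _))
      have h3 : ‖w - z i‖ < ε / (4 * (C + 1)) := by
        rw [← dist_eq_norm]; exact hi
      have h4 : C * ‖w - z i‖ < ε / 4 := by
        calc C * ‖w - z i‖ ≤ (C + 1) * ‖w - z i‖ :=
              mul_le_mul_of_nonneg_right (by linarith) (norm_nonneg _)
          _ < (C + 1) * (ε / (4 * (C + 1))) := by
              apply mul_lt_mul_of_pos_left h3 (by linarith)
          _ = ε / 4 := by field_simp
      exact lt_of_le_of_lt h2 h4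
    have hmid := hN m hm k hk
    rw [Real.dist_eq] at hmid ⊢
    calc |⟪u (φ m), w⟫ - ⟪u (φ k), w⟫|
        ≤ |⟪u (φ m), w⟫ - ⟪u (φ m), z i⟫| + |⟪u (φ m), z i⟫ - ⟪u (φ k), z i⟫|
          + |⟪u (φ k), z i⟫ - ⟪u (φ k), w⟫| := by
          have h1 := abs_sub_le (⟪u (φ m), w⟫) (⟪u (φ m), z i⟫) (⟪u (φ k), w⟫)
          have h2 := abs_sub_le (⟪u (φ m), z i⟫) (⟪u (φ k), z i⟫) (⟪u (φ k), w⟫)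
          linarith
      _ < ε/4 + ε/2 + ε/4 := by
          refine add_lt_add (add_lt_add (key m) hmid) ?_
          rw [abs_sub_comm]; exact key k
      _ = ε := by ring
  have hlim : ∀ w : H, ∃ l, Tendsto (fun k => ⟪u (φ k), w⟫) atTop (𝓝 l) :=
    fun w => cauchySeq_tendsto_of_complete (hcau w)
  choose f hf using hlim
  have hbound : ∀ w, |f w| ≤ C * ‖w‖ := by
    intro w
    refine le_of_tendsto (hf w).abs (Eventually.of_forall fun k => ?_)
    exact (abs_real_inner_le_norm _ _).trans
      (mul_le_mul_of_nonneg_right (hC _) (norm_nonneg _))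
  have hadd : ∀ a b, f (a + b) = f a + f b := by
    intro a b
    refine tendsto_nhds_unique (hf (a + b)) ?_
    have := (hf a).add (hf b)
    simpa [inner_add_right] using this
  have hsmul : ∀ (c : ℝ) (a : H), f (c • a) = c * f a := by
    intro c a
    refine tendsto_nhds_unique (hf (c • a)) ?_
    have := (hf a).const_mul c
    simpa [inner_smul_right] using this
  let flin : H →ₗ[ℝ] ℝ :=
    { toFun := f, map_add' := hadd, map_smul' := hsmul }
  let fcont : H →L[ℝ] ℝ := flin.mkContinuous C fun w => by
    simpa [flin, Real.norm_eq_abs] using hbound w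
  refine ⟨(InnerProductSpace.toDual ℝ H).symm fcont, φ, hφ, fun w => ?_⟩
  have hx : ⟪(InnerProductSpace.toDual ℝ H).symm fcont, w⟫ = fcont w :=
    InnerProductSpace.toDual_symm_apply
  rw [hx]
  exact hf w

variable {X : Type*} [MeasurableSpace X] {μ : Measure X}

theorem real_inner_l2 (a b : ℝ) : ⟪a, b⟫ = a * b := by
  simp [RCLike.inner_apply]; ring

theorem sq_integrable (v : Lp ℝ 2 μ) : Integrable (fun t => (v t)^2) μ := by
  have := L2.integrable_inner (𝕜 := ℝ) v v
  simpa [RCLike.inner_apply, sq] using this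

theorem norm_sq_eq_integral (v : Lp ℝ 2 μ) : ‖v‖^2 = ∫ t, (v t)^2 ∂μ := by
  rw [← real_inner_self_eq_norm_sq, L2.inner_def]
  refine integral_congr_ae (Eventually.of_forall fun t => ?_)
  simp [RCLike.inner_apply, sq]

/-- the indicator multiplication of an `Lp` element -/
def indLp {T : Set X} (hT : MeasurableSet T) (v : Lp ℝ 2 μ) : Lp ℝ 2 μ :=
  ((Lp.memLp v).indicator hT).toLp (T.indicator v)

theorem indLp_coe {T : Set X} (hT : MeasurableSet T) (v : Lp ℝ 2 μ) :
    (indLp hT v : X → ℝ) =ᵐ[μ] T.indicator v :=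
  MemLp.coeFn_toLp _

theorem inner_indLp {T : Set X} (hT : MeasurableSet T) (v x : Lp ℝ 2 μ) :
    ⟪x, indLp hT v⟫ = ∫ t in T, (x t) * (v t) ∂μ := by
  rw [L2.inner_def]
  have h1 : ∫ t, ⟪x t, indLp hT v t⟫ ∂μ = ∫ t, T.indicator (fun s => x s * v s) t ∂μ := by
    refine integral_congr_ae ?_
    filter_upwards [indLp_coe hT v] with t ht
    rw [real_inner_l2, ht]
    by_cases hmem : t ∈ T <;> simp [Set.indicator_of_mem, Set.indicator_of_notMem, hmem]
  rw [h1, integral_indicator hT]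

theorem norm_indLp_sq {T : Set X} (hT : MeasurableSet T) (v : Lp ℝ 2 μ) :
    ‖indLp hT v‖^2 = ∫ t in T, (v t)^2 ∂μ := by
  rw [← real_inner_self_eq_norm_sq, inner_indLp hT v]
  refine integral_congr_ae ?_
  have h : ∀ᵐ t ∂(μ.restrict T), (indLp hT v : X → ℝ) t = T.indicator v t :=
    ae_restrict_of_ae (indLp_coe hT v)
  filter_upwards [h, ae_restrict_mem hT] with t ht htT
  rw [ht, Set.indicator_of_mem htT, sq]

end Aux

section Aux2

variable {n : ℕ} {Ω S : Set (Fin n → ℝ)}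

theorem sqInt_nonneg (Ω T : Set (Fin n → ℝ)) (v : Lp ℝ 2 (volume.restrict Ω)) :
    0 ≤ sqInt Ω T v :=
  integral_nonneg fun _ => sq_nonneg _

theorem restrict_compl_eq (hΩ : MeasurableSet Ω) (hS : MeasurableSet S) :
    ((volume.restrict Ω).restrict Sᶜ : Measure (Fin n → ℝ)) =
      (volume.restrict Ω).restrict (Ω \ S) := by
  rw [Measure.restrict_restrict hS.compl, Measure.restrict_restrict (hΩ.diff hS)]
  congr 1
  ext t
  simp only [Set.mem_inter_iff, Set.mem_compl_iff, Set.mem_diff]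
  tauto

theorem norm_sq_split (hΩ : MeasurableSet Ω) (hS : MeasurableSet S)
    (v : Lp ℝ 2 (volume.restrict Ω)) :
    ‖v‖^2 = sqInt Ω S v + sqInt Ω (Ω \ S) v := by
  rw [norm_sq_eq_integral v, ← integral_add_compl hS (sq_integrable v)]
  have h := restrict_compl_eq hΩ hS
  unfold sqInt
  rw [show (∫ t in Sᶜ, (v t)^2 ∂(volume.restrict Ω)) =
      ∫ t in Ω \ S, (v t)^2 ∂(volume.restrict Ω) by rw [← h]]

theorem zeroOff_sqInt {v : Lp ℝ 2 (volume.restrict Ω)}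
    (hv : ∀ᵐ t ∂((volume.restrict Ω).restrict (Ω \ S)), v t = 0) :
    sqInt Ω (Ω \ S) v = 0 := by
  unfold sqInt
  have h0 : (fun t => (v t : ℝ)^2) =ᵐ[(volume.restrict Ω).restrict (Ω \ S)] 0 := by
    filter_upwards [hv] with t ht
    simp [ht]
  rw [integral_congr_ae h0]
  simp

theorem sqInt_zeroOff {v : Lp ℝ 2 (volume.restrict Ω)}
    (h : sqInt Ω (Ω \ S) v = 0) :
    ∀ᵐ t ∂((volume.restrict Ω).restrict (Ω \ S)), v t = 0 := by
  have hi : Integrable (fun t => (v t)^2) ((volume.restrict Ω).restrict (Ω \ S)) :=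
    (sq_integrable v).restrict
  have h0 := (integral_eq_zero_iff_of_nonneg_ae
    (Eventually.of_forall fun t => sq_nonneg (v t)) hi).1 h
  filter_upwards [h0] with t ht
  exact (pow_eq_zero_iff (by norm_num : (2:ℕ) ≠ 0)).1 ht

end Aux2

instance : Fact ((2 : ℝ≥0∞) ≠ ∞) := ⟨by norm_num⟩

/-- **Convergence under uniqueness**: with `α(δ) → 0` and `δ²/α(δ) → 0` as
`δ → 0⁺`, if the `x*`-`S`-minimum-norm solution `x†` is unique, then for any
family `(x^δ)_{δ>0}` of minimizers of `J_{α(δ),S,y^δ}` over `D(F)` with data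
`‖y − y^δ‖ ≤ δ`, one has `x^δ → x†` strongly in `L²(Ω)` as `δ → 0⁺`. -/
theorem convergence_under_uniqueness
    {n : ℕ} (Ω : Set (Fin n → ℝ)) (hΩmeas : MeasurableSet Ω)
    (hΩbdd : Bornology.IsBounded Ω)
    {Y : Type*} [NormedAddCommGroup Y] [InnerProductSpace ℝ Y] [CompleteSpace Y]
    (D : Set (Lp ℝ 2 (volume.restrict Ω))) (hD : D.Nonempty)
    (F : Lp ℝ 2 (volume.restrict Ω) → Y)
    (hFcont : ContinuousOn F D)
    (hFweak : ∀ (u : ℕ → Lp ℝ 2 (volume.restrict Ω))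
      (x : Lp ℝ 2 (volume.restrict Ω)) (z : Y),
      (∀ k, u k ∈ D) → WeakConv u x → WeakConv (fun k => F (u k)) z →
        x ∈ D ∧ F x = z)
    (xstar : Lp ℝ 2 (volume.restrict Ω))
    (S : Set (Fin n → ℝ)) (hSmeas : MeasurableSet S) (hSΩ : S ⊆ Ω)
    (hxstar : ZeroOff Ω S xstar)
    (y : Y)
    (α : ℝ → ℝ) (hαpos : ∀ δ > (0 : ℝ), 0 < α δ)
    (hα0 : Tendsto α (𝓝[>] (0 : ℝ)) (𝓝 0))
    (hδ2α : Tendsto (fun δ => δ ^ 2 / α δ) (𝓝[>] (0 : ℝ)) (𝓝 0))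
    (xdag : Lp ℝ 2 (volume.restrict Ω)) (hxdag : IsMNS Ω D F xstar S y xdag)
    (huniq : ∀ x', IsMNS Ω D F xstar S y x' → x' = xdag)
    (xδ : ℝ → Lp ℝ 2 (volume.restrict Ω)) (yδ : ℝ → Y)
    (hdata : ∀ δ > (0 : ℝ), ‖y - yδ δ‖ ≤ δ)
    (hmin : ∀ δ > (0 : ℝ), IsMinimizer (J Ω F xstar (α δ) S (yδ δ)) D (xδ δ)) :
    Tendsto xδ (𝓝[>] (0 : ℝ)) (𝓝 xdag) := by
  classical
  have hT : MeasurableSet (Ω \ S) := hΩmeas.diff hSmeas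
  haveI : SecondCountableTopology (Lp ℝ 2 (volume.restrict Ω)) := by infer_instance
  -- the difference xdag - xstar vanishes a.e. off S
  have hsub_dag : ∀ᵐ t ∂((volume.restrict Ω).restrict (Ω \ S)),
      (xdag - xstar : Lp ℝ 2 (volume.restrict Ω)) t = xdag t - xstar t := by
    have h : ∀ᵐ t ∂(volume.restrict Ω),
        (xdag - xstar : Lp ℝ 2 (volume.restrict Ω)) t = xdag t - xstar t := by
      filter_upwards [Lp.coeFn_sub xdag xstar] with t ht
      simpa using ht
    exact ae_restrict_of_ae h
  have hZdag : sqInt Ω (Ω \ S) (xdag - xstar) = 0 := by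
    refine zeroOff_sqInt ?_
    filter_upwards [hsub_dag, hxdag.2.2.1, hxstar] with t h1 h2 h3
    rw [h1, h2, h3, sub_zero]
  set Msq : ℝ := sqInt Ω S (xdag - xstar) with hMsqdef
  have hMsq_norm : ‖xdag - xstar‖^2 = Msq := by
    rw [norm_sq_split hΩmeas hSmeas, hZdag, add_zero]
  have hMsq_nonneg : 0 ≤ Msq := sqInt_nonneg _ _ _
  -- reduce to sequences
  refine tendsto_of_subseq_tendsto fun d hd => ?_
  obtain ⟨N₀, hN₀⟩ := Filter.eventually_atTop.1 (hd self_mem_nhdsWithin)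
  set e : ℕ → ℝ := fun k => d (k + N₀) with he_def
  have hepos : ∀ k, 0 < e k := fun k => hN₀ (k + N₀) (Nat.le_add_left _ _)
  have he0 : Tendsto e atTop (𝓝[>] 0) := hd.comp (tendsto_add_atTop_nat N₀)
  have he0' : Tendsto e atTop (𝓝 0) := he0.mono_right nhdsWithin_le_nhds
  have hapos : ∀ k, 0 < α (e k) := fun k => hαpos _ (hepos k)
  have ha0 : Tendsto (fun k => α (e k)) atTop (𝓝 0) := hα0.comp he0
  have hq0 : Tendsto (fun k => (e k)^2 / α (e k)) atTop (𝓝 0) := hδ2α.comp he0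
  set u : ℕ → Lp ℝ 2 (volume.restrict Ω) := fun k => xδ (e k) with hu_def
  have huD : ∀ k, u k ∈ D := fun k => (hmin _ (hepos k)).1
  -- the fundamental bound from minimality
  have hJb : ∀ k, ‖F (u k) - yδ (e k)‖^2 +
      (α (e k) * sqInt Ω S (u k - xstar) + sqInt Ω (Ω \ S) (u k - xstar)) ≤
      (e k)^2 + α (e k) * Msq := by
    intro k
    have h1 := (hmin _ (hepos k)).2 xdag hxdag.1
    simp only [J] at h1
    rw [hxdag.2.1, hZdag] at h1
    have h2 : ‖y - yδ (e k)‖^2 ≤ (e k)^2 :=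
      pow_le_pow_left₀ (norm_nonneg _) (hdata _ (hepos k)) 2
    calc ‖F (u k) - yδ (e k)‖^2 +
        (α (e k) * sqInt Ω S (u k - xstar) + sqInt Ω (Ω \ S) (u k - xstar))
        ≤ ‖y - yδ (e k)‖^2 + (α (e k) * Msq + 0) := h1
      _ ≤ (e k)^2 + α (e k) * Msq := by linarith
  have hFb : ∀ k, ‖F (u k) - yδ (e k)‖^2 ≤ (e k)^2 + α (e k) * Msq := by
    intro k
    have h1 := hJb k
    have h2 := sqInt_nonneg Ω (Ω \ S) (u k - xstar)
    have h3 := mul_nonneg (hapos k).le (sqInt_nonneg Ω S (u k - xstar))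
    linarith
  have hTb : ∀ k, sqInt Ω (Ω \ S) (u k - xstar) ≤ (e k)^2 + α (e k) * Msq := by
    intro k
    have h1 := hJb k
    have h2 := sq_nonneg ‖F (u k) - yδ (e k)‖
    have h3 := mul_nonneg (hapos k).le (sqInt_nonneg Ω S (u k - xstar))
    linarith
  have hSb : ∀ k, sqInt Ω S (u k - xstar) ≤ (e k)^2 / α (e k) + Msq := by
    intro k
    have h1 := hJb k
    have h2 := sq_nonneg ‖F (u k) - yδ (e k)‖
    have h3 := sqInt_nonneg Ω (Ω \ S) (u k - xstar)
    have h4 : α (e k) * sqInt Ω S (u k - xstar) ≤ (e k)^2 + α (e k) * Msq := by linarith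
    have h5 : sqInt Ω S (u k - xstar) ≤ ((e k)^2 + α (e k) * Msq) / α (e k) :=
      (le_div_iff₀ (hapos k)).2 (by linarith [h4])
    calc sqInt Ω S (u k - xstar) ≤ ((e k)^2 + α (e k) * Msq) / α (e k) := h5
      _ = (e k)^2 / α (e k) + Msq := by
          rw [add_div, mul_comm, mul_div_assoc, div_self (hapos k).ne', mul_one]
  set B : ℕ → ℝ := fun k => ((e k)^2 / α (e k) + Msq) + ((e k)^2 + α (e k) * Msq)
    with hB_def
  have hnormb : ∀ k, ‖u k - xstar‖^2 ≤ B k := by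
    intro k
    rw [norm_sq_split hΩmeas hSmeas]
    have := hSb k
    have := hTb k
    simp only [hB_def]
    linarith
  have hB : Tendsto B atTop (𝓝 Msq) := by
    have h1 := ((hq0.add (tendsto_const_nhds (x := Msq)))).add
      ((he0'.pow 2).add (ha0.mul_const Msq))
    simpa using h1
  -- boundedness and weak compactness
  obtain ⟨CB, hCB⟩ := hB.bddAbove_range
  have hC : ∀ k, ‖u k‖ ≤ Real.sqrt (max CB 0) + ‖xstar‖ := by
    intro k
    have h1 : ‖u k - xstar‖^2 ≤ max CB 0 :=
      le_trans (hnormb k) (le_max_of_le_left (hCB ⟨k, rfl⟩))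
    have h2 : ‖u k - xstar‖ ≤ Real.sqrt (max CB 0) :=
      Real.le_sqrt_of_sq_le h1
    calc ‖u k‖ = ‖(u k - xstar) + xstar‖ := by rw [sub_add_cancel]
      _ ≤ ‖u k - xstar‖ + ‖xstar‖ := norm_add_le _ _
      _ ≤ Real.sqrt (max CB 0) + ‖xstar‖ := by linarith
  obtain ⟨xbar, φ, hφ, hweak⟩ := weak_seq_compact u _ hC
  have hφtop : Tendsto φ atTop atTop := hφ.tendsto_atTop
  -- strong convergence of F values
  have hFy : Tendsto (fun k => F (u (φ k))) atTop (𝓝 y) := by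
    rw [tendsto_iff_norm_sub_tendsto_zero]
    have hb : ∀ k, ‖F (u (φ k)) - y‖ ≤
        Real.sqrt ((e (φ k))^2 + α (e (φ k)) * Msq) + e (φ k) := by
      intro k
      have h1 : ‖F (u (φ k)) - y‖ ≤ ‖F (u (φ k)) - yδ (e (φ k))‖ + ‖yδ (e (φ k)) - y‖ :=
        norm_sub_le_norm_sub_add_norm_sub _ _ _
      have h2 : ‖F (u (φ k)) - yδ (e (φ k))‖ ≤
          Real.sqrt ((e (φ k))^2 + α (e (φ k)) * Msq) :=
        Real.le_sqrt_of_sq_le (hFb (φ k))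
      have h3 : ‖yδ (e (φ k)) - y‖ ≤ e (φ k) := by
        rw [norm_sub_rev]; exact hdata _ (hepos (φ k))
      linarith
    refine squeeze_zero (fun _ => norm_nonneg _) hb ?_
    have h1 : Tendsto (fun k => (e (φ k))^2 + α (e (φ k)) * Msq) atTop (𝓝 0) := by
      have := (((he0'.comp hφtop).pow 2)).add ((ha0.comp hφtop).mul_const Msq)
      simpa using this
    have h2 := h1.sqrt.add (he0'.comp hφtop)
    simpa using h2
  have hFweakconv : WeakConv (fun k => F ((u ∘ φ) k)) y :=
    fun z => hFy.inner tendsto_const_nhds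
  obtain ⟨hxbarD, hFxbar⟩ := hFweak (u ∘ φ) xbar y (fun k => huD (φ k)) hweak hFweakconv
  -- shifted weak convergence
  have hweak' : ∀ z, Tendsto (fun k => ⟪u (φ k) - xstar, z⟫) atTop
      (𝓝 ⟪xbar - xstar, z⟫) := by
    intro z
    have := (hweak z).sub (tendsto_const_nhds (x := ⟪xstar, z⟫))
    simpa [inner_sub_left] using this
  -- the weak limit vanishes off S
  have hTsub0 : Tendsto (fun k => sqInt Ω (Ω \ S) (u (φ k) - xstar)) atTop (𝓝 0) := by
    refine squeeze_zero (fun k => sqInt_nonneg _ _ _) (fun k => hTb (φ k)) ?_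
    have := (((he0'.comp hφtop).pow 2)).add ((ha0.comp hφtop).mul_const Msq)
    simpa using this
  have hinner_eq : ∀ (x' : Lp ℝ 2 (volume.restrict Ω)),
      ⟪x', indLp hT (xbar - xstar)⟫ =
        ∫ t in Ω \ S, (x' t) * ((xbar - xstar : Lp ℝ 2 (volume.restrict Ω)) t)
          ∂(volume.restrict Ω) := fun x' => inner_indLp hT (xbar - xstar) x'
  have hZxbar : ZeroOff Ω S xbar := by
    set w : Lp ℝ 2 (volume.restrict Ω) := indLp hT (xbar - xstar) with hw_def
    have hlim1 : Tendsto (fun k => ⟪u (φ k) - xstar, w⟫) atTop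
        (𝓝 ⟪xbar - xstar, w⟫) := hweak' w
    have hkey : ∀ k, |⟪u (φ k) - xstar, w⟫| ≤
        Real.sqrt (sqInt Ω (Ω \ S) (u (φ k) - xstar)) * ‖w‖ := by
      intro k
      have h1 : ⟪u (φ k) - xstar, w⟫ = ⟪indLp hT (u (φ k) - xstar), w⟫ := by
        rw [hw_def, hinner_eq, hinner_eq]
        refine integral_congr_ae ?_
        have hco : ∀ᵐ t ∂((volume.restrict Ω).restrict (Ω \ S)),
            (indLp hT (u (φ k) - xstar) : _ → ℝ) t =
              (Ω \ S).indicator (u (φ k) - xstar : Lp ℝ 2 (volume.restrict Ω)) t :=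
          ae_restrict_of_ae (indLp_coe hT _)
        filter_upwards [hco, ae_restrict_mem hT] with t h2 h3
        rw [h2, Set.indicator_of_mem h3]
      have h4 : ‖indLp hT (u (φ k) - xstar)‖ =
          Real.sqrt (sqInt Ω (Ω \ S) (u (φ k) - xstar)) := by
        have h5 : sqInt Ω (Ω \ S) (u (φ k) - xstar) = ‖indLp hT (u (φ k) - xstar)‖^2 :=
          (norm_indLp_sq hT _).symm
        rw [h5, Real.sqrt_sq (norm_nonneg _)]
      rw [h1, ← h4]
      exact abs_real_inner_le_norm _ _
    have hto0 : Tendsto (fun k =>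
        Real.sqrt (sqInt Ω (Ω \ S) (u (φ k) - xstar)) * ‖w‖) atTop (𝓝 0) := by
      have := hTsub0.sqrt.mul_const ‖w‖
      simpa using this
    have h0 : ⟪xbar - xstar, w⟫ = 0 := by
      refine tendsto_nhds_unique hlim1 ?_
      exact squeeze_zero_norm hkey hto0
    have hsq0 : sqInt Ω (Ω \ S) (xbar - xstar) = 0 := by
      rw [hw_def, hinner_eq] at h0
      rw [← h0]
      unfold sqInt
      refine integral_congr_ae (Eventually.of_forall fun t => ?_)
      ring
    have h3 := sqInt_zeroOff hsq0
    have hsub_bar : ∀ᵐ t ∂((volume.restrict Ω).restrict (Ω \ S)),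
        (xbar - xstar : Lp ℝ 2 (volume.restrict Ω)) t = xbar t - xstar t := by
      have h : ∀ᵐ t ∂(volume.restrict Ω),
          (xbar - xstar : Lp ℝ 2 (volume.restrict Ω)) t = xbar t - xstar t := by
        filter_upwards [Lp.coeFn_sub xbar xstar] with t ht
        simpa using ht
      exact ae_restrict_of_ae h
    filter_upwards [h3, hsub_bar, hxstar] with t h1 h2 h5
    have := h2 ▸ h1
    linarith
  -- the weak limit is norm-minimal
  have hnorm_le : ‖xbar - xstar‖ ≤ ‖xdag - xstar‖ := by
    have hlim2 : Tendsto (fun k => ⟪u (φ k) - xstar, xbar - xstar⟫) atTop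
        (𝓝 (‖xbar - xstar‖^2)) := by
      have := hweak' (xbar - xstar)
      rwa [real_inner_self_eq_norm_sq] at this
    have hub : ∀ k, ⟪u (φ k) - xstar, xbar - xstar⟫ ≤
        Real.sqrt (B (φ k)) * ‖xbar - xstar‖ := by
      intro k
      have h1 := real_inner_le_norm (u (φ k) - xstar) (xbar - xstar)
      have h2 : ‖u (φ k) - xstar‖ ≤ Real.sqrt (B (φ k)) :=
        Real.le_sqrt_of_sq_le (hnormb (φ k))
      calc ⟪u (φ k) - xstar, xbar - xstar⟫ ≤ ‖u (φ k) - xstar‖ * ‖xbar - xstar‖ := h1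
        _ ≤ Real.sqrt (B (φ k)) * ‖xbar - xstar‖ :=
          mul_le_mul_of_nonneg_right h2 (norm_nonneg _)
    have hlim3 : Tendsto (fun k => Real.sqrt (B (φ k)) * ‖xbar - xstar‖) atTop
        (𝓝 (Real.sqrt Msq * ‖xbar - xstar‖)) := ((hB.comp hφtop).sqrt).mul_const _
    have hle : ‖xbar - xstar‖^2 ≤ Real.sqrt Msq * ‖xbar - xstar‖ :=
      le_of_tendsto_of_tendsto' hlim2 hlim3 hub
    have hsM : Real.sqrt Msq = ‖xdag - xstar‖ := by
      rw [← hMsq_norm, Real.sqrt_sq (norm_nonneg _)]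
    rw [hsM] at hle
    rcases eq_or_lt_of_le (norm_nonneg (xbar - xstar)) with h0 | h0
    · rw [← h0]; exact norm_nonneg _
    · have hle' : ‖xbar - xstar‖ * ‖xbar - xstar‖ ≤ ‖xdag - xstar‖ * ‖xbar - xstar‖ := by
        rw [← pow_two]; exact hle
      exact le_of_mul_le_mul_right hle' h0
  -- xbar is an x*-S-minimum-norm solution, hence equals xdag
  have hxbarMNS : IsMNS Ω D F xstar S y xbar :=
    ⟨hxbarD, hFxbar, hZxbar, fun x hx hFx hZ => hnorm_le.trans (hxdag.2.2.2 x hx hFx hZ)⟩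
  have hxbar_eq : xbar = xdag := huniq xbar hxbarMNS
  -- strong convergence
  have hlim4 : Tendsto (fun k => ⟪u (φ k) - xstar, xdag - xstar⟫) atTop (𝓝 Msq) := by
    have := hweak' (xdag - xstar)
    rw [hxbar_eq, real_inner_self_eq_norm_sq, hMsq_norm] at this
    exact this
  have hexp : ∀ k, ‖u (φ k) - xdag‖^2 ≤
      B (φ k) - 2 * ⟪u (φ k) - xstar, xdag - xstar⟫ + Msq := by
    intro k
    have h1 : u (φ k) - xdag = (u (φ k) - xstar) - (xdag - xstar) := by abel
    rw [h1, norm_sub_sq_real, hMsq_norm]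
    have := hnormb (φ k)
    linarith
  have hrhs : Tendsto (fun k => B (φ k) - 2 * ⟪u (φ k) - xstar, xdag - xstar⟫ + Msq)
      atTop (𝓝 0) := by
    have h := ((hB.comp hφtop).sub (hlim4.const_mul 2)).add
      (tendsto_const_nhds (x := Msq))
    have h0 : Msq - 2 * Msq + Msq = 0 := by ring
    rw [h0] at h
    exact h
  have hsqconv : Tendsto (fun k => ‖u (φ k) - xdag‖^2) atTop (𝓝 0) :=
    squeeze_zero (fun _ => sq_nonneg _) hexp hrhs
  have hnormconv : Tendsto (fun k => ‖u (φ k) - xdag‖) atTop (𝓝 0) := by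
    have := hsqconv.sqrt
    simpa [Real.sqrt_sq (norm_nonneg _)] using this
  refine ⟨fun k => φ k + N₀, ?_⟩
  have heq : (fun k => xδ (d (φ k + N₀))) = fun k => u (φ k) := rfl
  rw [heq]
  exact tendsto_iff_norm_sub_tendsto_zero.2 hnormconv
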